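/- Let A be a 2×2 matrix with entries in {0,1}, let X_A = {x : ℤ → Fin 2 | for all k, A (x k) (x (k+1)) = 1} be the associated subshift of finite type with shift map σ_A given by (σ_A x)(k) = x(k+1), and for n ≥ 1 let Per_n(σ_A) = {x ∈ X_A | σ_A^n x = x}. Then for every real number t with |t| < 1/2, each set Per_n(σ_A) is finite, the series ∑_{n≥1} |Per_n(σ_A)| tⁿ/n converges, and exp(∑_{n≥1} |Per_n(σ_A)| tⁿ/n) = (det(A)·t² − tr(A)·t + 1)⁻¹, where det(A) and tr(A) are the determinant and trace of A viewed as an integer matrix. -/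

import Mathlib

/-- The shift map on bi-infinite sequences over the alphabet `Fin m`. -/
def shiftMap (m : ℕ) : (ℤ → Fin m) → (ℤ → Fin m) := fun x k => x (k + 1)

/-- The set of `n`-periodic points of the subshift of finite type `X_A` determined by the
`m × m` matrix `A`: bi-infinite sequences `x` lying in `X_A` that are fixed by the `n`-th
iterate of the shift map. -/
def perSet (m : ℕ) (A : Matrix (Fin m) (Fin m) ℤ) (n : ℕ) : Set (ℤ → Fin m) :=
  {x | (∀ k : ℤ, A (x k) (x (k + 1)) = 1) ∧ (shiftMap m)^[n] x = x}

open Matrix Finset in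
lemma pow_apply_count (A : Matrix (Fin 2) (Fin 2) ℤ) (n : ℕ) (i j : Fin 2) :
    (A ^ n) i j = ∑ f : Fin (n + 1) → Fin 2,
      if f 0 = i ∧ f (Fin.last n) = j then ∏ k : Fin n, A (f k.castSucc) (f k.succ) else 0 := by
  induction n generalizing j with
  | zero =>
      have e := Fintype.sum_equiv (Equiv.funUnique (Fin 1) (Fin 2))
        (fun f : Fin 1 → Fin 2 => if f 0 = i ∧ f (Fin.last 0) = j then
          (∏ k : Fin 0, A (f k.castSucc) (f k.succ)) else 0)
        (fun c => if c = i ∧ c = j then (1 : ℤ) else 0)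
        (fun f => by simp [Fin.last])
      rw [pow_zero, Matrix.one_apply, e]
      by_cases h : i = j
      · subst h; simp
      · rw [if_neg h]
        symm
        apply Finset.sum_eq_zero
        intro c _
        rw [if_neg]
        rintro ⟨rfl, rfl⟩
        exact h rfl
  | succ n ih =>
      have e := Fintype.sum_equiv (Fin.snocEquiv (fun _ : Fin (n + 2) => Fin 2))
        (fun p : Fin 2 × (Fin (n + 1) → Fin 2) =>
          if p.2 0 = i ∧ p.1 = j then
            (∏ k : Fin n, A (p.2 k.castSucc) (p.2 k.succ)) * A (p.2 (Fin.last n)) p.1 else 0)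
        (fun f : Fin (n + 2) → Fin 2 =>
          if f 0 = i ∧ f (Fin.last (n + 1)) = j then
            ∏ k : Fin (n + 1), A (f k.castSucc) (f k.succ) else 0)
        (fun p => by
          obtain ⟨c, g⟩ := p
          have h0 : Fin.snoc (α := fun _ => Fin 2) g c 0 = g 0 := by
            rw [← Fin.castSucc_zero, Fin.snoc_castSucc]
          simp only [Fin.snocEquiv_apply, Fin.prod_univ_castSucc, Fin.succ_castSucc,
            Fin.snoc_castSucc, Fin.snoc_last, Fin.succ_last, h0])
      rw [pow_succ, Matrix.mul_apply, ← e, Fintype.sum_prod_type]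
      simp only [ih, Finset.sum_mul, ite_mul, zero_mul]
      rw [Finset.sum_comm]
      conv_rhs => rw [Finset.sum_comm]
      apply Finset.sum_congr rfl
      intro g _
      by_cases hg : g 0 = i
      · simp [hg, Finset.sum_ite_eq, Finset.sum_ite_eq']
      · simp [hg]

open Matrix Finset in
lemma trace_pow_count (A : Matrix (Fin 2) (Fin 2) ℤ) (n : ℕ) :
    (A ^ (n + 1)).trace = ∑ f : Fin (n + 2) → Fin 2,
      if f 0 = f (Fin.last (n + 1)) then ∏ k : Fin (n + 1), A (f k.castSucc) (f k.succ) else 0 := by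
  rw [Matrix.trace]
  simp only [Matrix.diag, pow_apply_count]
  rw [Finset.sum_comm]
  apply Finset.sum_congr rfl
  intro f _
  by_cases h : f 0 = f (Fin.last (n + 1))
  · rw [if_pos h]
    rw [Finset.sum_eq_single (f 0)]
    · rw [if_pos ⟨rfl, h.symm⟩]
    · intro i _ hi
      rw [if_neg]
      rintro ⟨rfl, -⟩
      exact hi rfl
    · simp
  · rw [if_neg h]
    apply Finset.sum_eq_zero
    intro i _
    rw [if_neg]
    rintro ⟨rfl, h2⟩
    exact h h2.symm

open Matrix Finset in
lemma trace_pow_card (A : Matrix (Fin 2) (Fin 2) ℤ) (hA : ∀ i j, A i j = 0 ∨ A i j = 1) (n : ℕ) :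
    (A ^ (n + 1)).trace = ((Finset.univ.filter (fun f : Fin (n + 2) → Fin 2 =>
      f 0 = f (Fin.last (n + 1)) ∧ ∀ k : Fin (n + 1), A (f k.castSucc) (f k.succ) = 1)).card : ℤ) := by
  rw [trace_pow_count, Finset.card_filter]
  push_cast
  apply Finset.sum_congr rfl
  intro f _
  by_cases h1 : f 0 = f (Fin.last (n + 1))
  · by_cases h2 : ∀ k : Fin (n + 1), A (f k.castSucc) (f k.succ) = 1
    · rw [if_pos h1, if_pos ⟨h1, h2⟩, Finset.prod_eq_one (fun k _ => h2 k)]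
    · push_neg at h2
      obtain ⟨k, hk⟩ := h2
      have h0 : A (f k.castSucc) (f k.succ) = 0 := (hA _ _).resolve_right hk
      rw [if_pos h1, if_neg (by rintro ⟨-, h⟩; exact hk (h k)),
        Finset.prod_eq_zero (Finset.mem_univ k) h0]
  · rw [if_neg h1, if_neg (by rintro ⟨h, -⟩; exact h1 h)]

lemma shift_iter (x : ℤ → Fin 2) (q : ℕ) (k : ℤ) :
    (shiftMap 2)^[q] x k = x (k + q) := by
  induction q generalizing x k with
  | zero => simp
  | succ q ih =>
      rw [Function.iterate_succ_apply, ih]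
      show x (k + q + 1) = _
      congr 1
      push_cast
      ring

lemma periodic_shift (x : ℤ → Fin 2) (N : ℕ) (hx : (shiftMap 2)^[N] x = x)
    (q k : ℤ) : x (k + N * q) = x k := by
  have hper : ∀ j : ℤ, x (j + N) = x j := by
    intro j
    conv_rhs => rw [← hx]
    rw [shift_iter]
  induction q using Int.induction_on with
  | zero => simp
  | succ q ih =>
      have := hper (k + N * q)
      rw [show k + (N : ℤ) * (q + 1) = k + N * q + N by ring, this, ih]
  | pred q ih =>
      have h := hper (k + N * (-(q : ℤ) - 1))
      rw [show k + (N : ℤ) * (-(q : ℤ) - 1) + N = k + N * (-(q : ℤ)) by ring] at h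
      exact h.symm.trans ih

lemma periodic_mod (x : ℤ → Fin 2) (N : ℕ) (hN : 0 < N) (hx : (shiftMap 2)^[N] x = x)
    (k : ℤ) : x k = x (k % N) := by
  conv_lhs => rw [← Int.emod_add_mul_ediv k N]
  exact periodic_shift x N hx (k / N) (k % N)

def pidx (n : ℕ) (k : ℤ) : Fin (n + 2) :=
  ⟨(k % ((n + 1 : ℕ) : ℤ)).toNat, by
    have h0 : (0 : ℤ) ≤ k % ((n + 1 : ℕ) : ℤ) := Int.emod_nonneg k (by positivity)
    have h1 : k % ((n + 1 : ℕ) : ℤ) < ((n + 1 : ℕ) : ℤ) := Int.emod_lt_of_pos k (by positivity)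
    omega⟩

set_option maxHeartbeats 2000000 in
open Matrix Finset in
lemma perSet_card (A : Matrix (Fin 2) (Fin 2) ℤ) (hA : ∀ i j, A i j = 0 ∨ A i j = 1) (n : ℕ) :
    (perSet 2 A (n + 1)).Finite ∧ ((perSet 2 A (n + 1)).ncard : ℤ) = (A ^ (n + 1)).trace := by
  classical
  have hMpos : (0 : ℤ) < ((n + 1 : ℕ) : ℤ) := by positivity
  have hMne : ((n + 1 : ℕ) : ℤ) ≠ 0 := by positivity
  have hmod0 : ∀ k : ℤ, 0 ≤ k % ((n + 1 : ℕ) : ℤ) := fun k => Int.emod_nonneg k hMne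
  have hmod1 : ∀ k : ℤ, k % ((n + 1 : ℕ) : ℤ) < ((n + 1 : ℕ) : ℤ) :=
    fun k => Int.emod_lt_of_pos k hMpos
  set B : Finset (Fin (n + 2) → Fin 2) := Finset.univ.filter (fun f : Fin (n + 2) → Fin 2 =>
      f 0 = f (Fin.last (n + 1)) ∧ ∀ k : Fin (n + 1), A (f k.castSucc) (f k.succ) = 1) with hB
  have hinj : Set.InjOn (fun (x : ℤ → Fin 2) (j : Fin (n + 2)) => x (j.val : ℤ))
      (perSet 2 A (n + 1)) := by
    intro x hx y hy hxy
    funext k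
    have h0 := hmod0 k; have h1 := hmod1 k
    have ex : x k = x (k % ((n + 1 : ℕ) : ℤ)) := periodic_mod x (n + 1) (by omega) hx.2 k
    have ey : y k = y (k % ((n + 1 : ℕ) : ℤ)) := periodic_mod y (n + 1) (by omega) hy.2 k
    have e := congrFun hxy (pidx n k)
    simp only [pidx] at e
    rw [Int.toNat_of_nonneg h0] at e
    rw [ex, ey, e]
  have himg : (fun (x : ℤ → Fin 2) (j : Fin (n + 2)) => x (j.val : ℤ)) '' perSet 2 A (n + 1)
      = ↑B := by
    ext f
    constructor
    · rintro ⟨x, ⟨hx1, hx2⟩, rfl⟩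
      simp only [hB, Finset.coe_filter, Set.mem_setOf_eq, Finset.mem_univ, true_and]
      constructor
      · show x ((0 : Fin (n + 2)).val : ℤ) = x ((Fin.last (n + 1)).val : ℤ)
        have := periodic_shift x (n + 1) hx2 1 0
        simp only [mul_one, zero_add] at this
        simp only [Fin.val_zero, Fin.val_last, Nat.cast_zero]
        exact this.symm
      · intro k
        show A (x (k.castSucc.val : ℤ)) (x (k.succ.val : ℤ)) = 1
        have : ((k.succ.val : ℕ) : ℤ) = (k.castSucc.val : ℤ) + 1 := by
          simp [Fin.val_succ]
        rw [this]
        exact hx1 _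
    · intro hf
      simp only [hB, Finset.coe_filter, Set.mem_setOf_eq, Finset.mem_univ, true_and] at hf
      have hidxper : ∀ k : ℤ, pidx n (k + ((n + 1 : ℕ) : ℤ)) = pidx n k := by
        intro k
        apply Fin.ext
        show ((k + ((n + 1 : ℕ) : ℤ)) % ((n + 1 : ℕ) : ℤ)).toNat = _
        rw [show k + ((n + 1 : ℕ) : ℤ) = k + ((n + 1 : ℕ) : ℤ) * 1 by ring,
          Int.add_mul_emod_self_left]
        rfl
      have hshift : ∀ k1 : ℤ, ((k1 + 1) % ((n + 1 : ℕ) : ℤ))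
          = (k1 % ((n + 1 : ℕ) : ℤ) + 1) % ((n + 1 : ℕ) : ℤ) := by
        intro k1
        conv_lhs => rw [← Int.emod_add_mul_ediv k1 ((n + 1 : ℕ) : ℤ)]
        rw [show k1 % ((n + 1 : ℕ) : ℤ) + ((n + 1 : ℕ) : ℤ) * (k1 / ((n + 1 : ℕ) : ℤ)) + 1
            = k1 % ((n + 1 : ℕ) : ℤ) + 1 + ((n + 1 : ℕ) : ℤ) * (k1 / ((n + 1 : ℕ) : ℤ)) by ring,
          Int.add_mul_emod_self_left]
      refine ⟨fun k => f (pidx n k), ⟨?_, ?_⟩, ?_⟩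
      · -- edge condition
        intro k
        have h0 := hmod0 k; have h1 := hmod1 k
        show A (f (pidx n k)) (f (pidx n (k + 1))) = 1
        by_cases hc : k % ((n + 1 : ℕ) : ℤ) + 1 < ((n + 1 : ℕ) : ℤ)
        · have h2 : (k + 1) % ((n + 1 : ℕ) : ℤ) = k % ((n + 1 : ℕ) : ℤ) + 1 := by
            rw [hshift k, Int.emod_eq_of_lt (by omega) hc]
          have e1 : pidx n k
              = Fin.castSucc ⟨(k % ((n + 1 : ℕ) : ℤ)).toNat, by omega⟩ := by
            apply Fin.ext; simp [pidx]
          have e2 : pidx n (k + 1)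
              = Fin.succ ⟨(k % ((n + 1 : ℕ) : ℤ)).toNat, by omega⟩ := by
            apply Fin.ext
            simp only [pidx, Fin.val_succ]
            omega
          rw [e1, e2]
          exact hf.2 _
        · have hMeq : k % ((n + 1 : ℕ) : ℤ) + 1 = ((n + 1 : ℕ) : ℤ) := by omega
          have h2 : (k + 1) % ((n + 1 : ℕ) : ℤ) = 0 := by
            rw [hshift k, hMeq, Int.emod_self]
          have e1 : pidx n k
              = Fin.castSucc ⟨(k % ((n + 1 : ℕ) : ℤ)).toNat, by omega⟩ := by
            apply Fin.ext; simp [pidx]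
          have e2 : pidx n (k + 1) = (0 : Fin (n + 2)) := by
            apply Fin.ext
            show ((k + 1) % ((n + 1 : ℕ) : ℤ)).toNat = 0
            rw [h2]; rfl
          have e3 : Fin.last (n + 1)
              = Fin.succ ⟨(k % ((n + 1 : ℕ) : ℤ)).toNat, by omega⟩ := by
            apply Fin.ext
            simp only [Fin.val_last, Fin.val_succ]
            omega
          rw [e1, e2, hf.1, e3]
          exact hf.2 _
      · -- periodicity
        funext k
        rw [shift_iter]
        show f (pidx n (k + ((n + 1 : ℕ) : ℤ))) = f (pidx n k)
        rw [hidxper]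
      · -- restriction equals f
        funext j
        show f (pidx n ((j.val : ℕ) : ℤ)) = f j
        by_cases hj : (j.val : ℕ) < n + 1
        · have : pidx n ((j.val : ℕ) : ℤ) = j := by
            apply Fin.ext
            show (((j.val : ℕ) : ℤ) % ((n + 1 : ℕ) : ℤ)).toNat = j.val
            rw [Int.emod_eq_of_lt (by positivity) (by omega)]
            omega
          rw [this]
        · have hj2 : (j.val : ℕ) = n + 1 := by omega
          have e0 : pidx n ((j.val : ℕ) : ℤ) = 0 := by
            apply Fin.ext
            show (((j.val : ℕ) : ℤ) % ((n + 1 : ℕ) : ℤ)).toNat = 0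
            rw [hj2, Int.emod_self]
            rfl
          have ej : j = Fin.last (n + 1) := by apply Fin.ext; simpa using hj2
          rw [e0, ej, hf.1]
  constructor
  · exact Set.Finite.of_finite_image (by rw [himg]; exact B.finite_toSet) hinj
  · have hn := Set.ncard_image_of_injOn hinj
    rw [himg, Set.ncard_coe_finset] at hn
    rw [trace_pow_card A hA n, ← hB, ← hn]

open Matrix in
lemma cayley2 (A : Matrix (Fin 2) (Fin 2) ℤ) :
    A ^ 2 = A.trace • A - A.det • (1 : Matrix (Fin 2) (Fin 2) ℤ) := by
  ext i j
  fin_cases i <;> fin_cases j <;>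
    · simp only [pow_two, Matrix.mul_apply, Fin.sum_univ_two, Matrix.sub_apply,
        Matrix.smul_apply, Matrix.one_apply, Matrix.trace_fin_two, Matrix.det_fin_two,
        smul_eq_mul]
      norm_num
      ring

open Matrix in
lemma trace_rec (A : Matrix (Fin 2) (Fin 2) ℤ) (k : ℕ) :
    (A ^ (k + 2)).trace = A.trace * (A ^ (k + 1)).trace - A.det * (A ^ k).trace := by
  have : A ^ (k + 2) = A ^ k * A ^ 2 := by rw [pow_add]
  rw [this, cayley2, Matrix.mul_sub, Matrix.mul_smul, Matrix.mul_smul, Matrix.mul_one,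
    Matrix.trace_sub, Matrix.trace_smul, Matrix.trace_smul, ← pow_succ]
  simp [smul_eq_mul]

open Matrix in
lemma entry_facts (A : Matrix (Fin 2) (Fin 2) ℤ) (hA : ∀ i j, A i j = 0 ∨ A i j = 1) :
    0 ≤ A.trace ∧ A.trace ≤ 2 ∧ 4 * A.det ≤ A.trace ^ 2 ∧
      A.trace ^ 2 - 4 * A.det ≤ (4 - A.trace) ^ 2 ∧
      A.trace ^ 2 - 4 * A.det ≤ (A.trace + 4) ^ 2 := by
  rw [Matrix.trace_fin_two, Matrix.det_fin_two]
  rcases hA 0 0 with h00 | h00 <;> rcases hA 0 1 with h01 | h01 <;>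
    rcases hA 1 0 with h10 | h10 <;> rcases hA 1 1 with h11 | h11 <;>
    rw [h00, h01, h10, h11] <;> norm_num


theorem zeta_of_two_dim_SFT (A : Matrix (Fin 2) (Fin 2) ℤ)
    (hA : ∀ i j, A i j = 0 ∨ A i j = 1) (t : ℝ) (ht : |t| < 1 / 2) :
    (∀ n : ℕ, 1 ≤ n → (perSet 2 A n).Finite) ∧
    Summable (fun n : ℕ => ((perSet 2 A (n + 1)).ncard : ℝ) * t ^ (n + 1) / (n + 1)) ∧
    Real.exp (∑' n : ℕ, ((perSet 2 A (n + 1)).ncard : ℝ) * t ^ (n + 1) / (n + 1)) =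
      ((A.det : ℝ) * t ^ 2 - (A.trace : ℝ) * t + 1)⁻¹ := by
  obtain ⟨e1, e2, e3, e4, e5⟩ := entry_facts A hA
  set τ : ℝ := (A.trace : ℝ) with hτ
  set d : ℝ := (A.det : ℝ) with hd
  have r1 : (0 : ℝ) ≤ τ := by rw [hτ]; exact_mod_cast e1
  have r2 : τ ≤ 2 := by rw [hτ]; exact_mod_cast e2
  have r3 : 4 * d ≤ τ ^ 2 := by rw [hτ, hd]; exact_mod_cast e3
  have r4 : τ ^ 2 - 4 * d ≤ (4 - τ) ^ 2 := by rw [hτ, hd]; exact_mod_cast e4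
  have r5 : τ ^ 2 - 4 * d ≤ (τ + 4) ^ 2 := by rw [hτ, hd]; exact_mod_cast e5
  have hD0 : (0 : ℝ) ≤ τ ^ 2 - 4 * d := by linarith
  set s : ℝ := Real.sqrt (τ ^ 2 - 4 * d) with hs
  have hs0 : 0 ≤ s := Real.sqrt_nonneg _
  have hs2 : s ^ 2 = τ ^ 2 - 4 * d := Real.sq_sqrt hD0
  set lam : ℝ := (τ + s) / 2 with hlam
  set mu : ℝ := (τ - s) / 2 with hmu
  have hsum : lam + mu = τ := by rw [hlam, hmu]; ring
  have hprod : lam * mu = d := by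
    have : lam * mu = (τ ^ 2 - s ^ 2) / 4 := by rw [hlam, hmu]; ring
    rw [this, hs2]; ring
  have hs_le1 : s ≤ 4 - τ := by
    have h := Real.sqrt_le_sqrt r4
    rwa [Real.sqrt_sq (by linarith : (0:ℝ) ≤ 4 - τ)] at h
  have hs_le2 : s ≤ τ + 4 := by
    have h := Real.sqrt_le_sqrt r5
    rwa [Real.sqrt_sq (by linarith : (0:ℝ) ≤ τ + 4)] at h
  have hlam_abs : |lam| ≤ 2 := abs_le.2 ⟨by rw [hlam]; linarith, by rw [hlam]; linarith⟩
  have hmu_abs : |mu| ≤ 2 := abs_le.2 ⟨by rw [hmu]; linarith, by rw [hmu]; linarith⟩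
  have hlt : ∀ y : ℝ, |y| ≤ 2 → |y * t| < 1 := by
    intro y hy
    rw [abs_mul]
    calc |y| * |t| ≤ 2 * |t| := by
          apply mul_le_mul_of_nonneg_right hy (abs_nonneg t)
      _ < 1 := by linarith
  have hlamt : |lam * t| < 1 := hlt lam hlam_abs
  have hmut : |mu * t| < 1 := hlt mu hmu_abs
  -- trace formula
  have key : ∀ m : ℕ, ((A ^ m).trace : ℝ) = lam ^ m + mu ^ m ∧
      ((A ^ (m + 1)).trace : ℝ) = lam ^ (m + 1) + mu ^ (m + 1) := by
    intro m
    induction m with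
    | zero =>
        constructor
        · simp [Matrix.trace_one]; norm_num
        · rw [pow_one, pow_one, pow_one, hsum]
    | succ m ih =>
        refine ⟨ih.2, ?_⟩
        have hrec := trace_rec A m
        have : ((A ^ (m + 2)).trace : ℝ)
            = τ * ((A ^ (m + 1)).trace : ℝ) - d * ((A ^ m).trace : ℝ) := by
          rw [hτ, hd]
          exact_mod_cast congrArg (fun z : ℤ => (z : ℝ)) hrec
        rw [this, ih.1, ih.2, ← hsum, ← hprod]
        ring
  -- summand identity
  have hterm : ∀ n : ℕ, ((perSet 2 A (n + 1)).ncard : ℝ) * t ^ (n + 1) / (n + 1)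
      = (lam * t) ^ (n + 1) / (n + 1) + (mu * t) ^ (n + 1) / (n + 1) := by
    intro n
    have hc : ((perSet 2 A (n + 1)).ncard : ℝ) = lam ^ (n + 1) + mu ^ (n + 1) := by
      have h := (perSet_card A hA n).2
      have : ((perSet 2 A (n + 1)).ncard : ℝ) = ((A ^ (n + 1)).trace : ℝ) := by
        exact_mod_cast congrArg (fun z : ℤ => (z : ℝ)) h
      rw [this, (key (n + 1)).1]
    rw [hc, mul_pow, mul_pow]
    ring
  have h1 := Real.hasSum_pow_div_log_of_abs_lt_one hlamt
  have h2 := Real.hasSum_pow_div_log_of_abs_lt_one hmut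
  have hS := h1.add h2
  have hS' : HasSum (fun n : ℕ => ((perSet 2 A (n + 1)).ncard : ℝ) * t ^ (n + 1) / (n + 1))
      (-Real.log (1 - lam * t) + -Real.log (1 - mu * t)) := hS.congr_fun hterm
  have ha : 0 < 1 - lam * t := by
    have := (abs_lt.1 hlamt).2
    linarith
  have hb : 0 < 1 - mu * t := by
    have := (abs_lt.1 hmut).2
    linarith
  refine ⟨?_, hS'.summable, ?_⟩
  · intro n hn
    obtain ⟨m, rfl⟩ : ∃ m, n = m + 1 := ⟨n - 1, by omega⟩
    exact (perSet_card A hA m).1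
  · rw [hS'.tsum_eq, ← neg_add, ← Real.log_mul (ne_of_gt ha) (ne_of_gt hb), Real.exp_neg,
      Real.exp_log (by positivity)]
    congr 1
    linear_combination t ^ 2 * hprod - t * hsum
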